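/- For any 2ⁿ×2ⁿ complex matrix ρ, the distance to its diagonal part is controlled by the per-qubit dephasing disturbances: ‖diag(ρ) − ρ‖₂ ≤ (1/2)·∑_{i=1}^{n} ‖Z_i ρ Z_i − ρ‖₂. -/

import Mathlib

noncomputable section

/-- The single-qubit Pauli Z acting on qubit `i` of an `n`-qubit system:
the diagonal unitary with entries (Z_i)_{s,s} = (−1)^{s_i}. -/
def Zat (n : ℕ) (i : Fin n) : Matrix (Fin n → Fin 2) (Fin n → Fin 2) ℂ :=
  Matrix.diagonal fun s => (-1 : ℂ) ^ (s i : ℕ)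

/-- The Frobenius (Hilbert–Schmidt) norm of a complex matrix. -/
def frob {m n : Type*} [Fintype m] [Fintype n] (A : Matrix m n ℂ) : ℝ :=
  Real.sqrt (∑ i, ∑ j, ‖A i j‖ ^ 2)

lemma sqrt_add_le' {x y : ℝ} (hx : 0 ≤ x) (hy : 0 ≤ y) :
    Real.sqrt (x + y) ≤ Real.sqrt x + Real.sqrt y := by
  have h : x + y ≤ (Real.sqrt x + Real.sqrt y) ^ 2 := by
    nlinarith [Real.sq_sqrt hx, Real.sq_sqrt hy, Real.sqrt_nonneg x, Real.sqrt_nonneg y,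
      mul_nonneg (Real.sqrt_nonneg x) (Real.sqrt_nonneg y)]
  calc Real.sqrt (x + y) ≤ Real.sqrt ((Real.sqrt x + Real.sqrt y) ^ 2) := Real.sqrt_le_sqrt h
    _ = Real.sqrt x + Real.sqrt y := Real.sqrt_sq (by positivity)

lemma sqrt_sum_le {ι : Type*} (s : Finset ι) (f : ι → ℝ) (hf : ∀ i ∈ s, 0 ≤ f i) :
    Real.sqrt (∑ i ∈ s, f i) ≤ ∑ i ∈ s, Real.sqrt (f i) := by
  induction s using Finset.cons_induction with
  | empty => simp
  | cons a s ha ih =>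
    rw [Finset.sum_cons, Finset.sum_cons]
    have h1 : 0 ≤ f a := hf a (Finset.mem_cons_self _ _)
    have h2 : 0 ≤ ∑ i ∈ s, f i := Finset.sum_nonneg fun i hi => hf i (Finset.mem_cons_of_mem hi)
    exact (sqrt_add_le' h1 h2).trans (by
      gcongr
      exact ih fun i hi => hf i (Finset.mem_cons_of_mem hi))

theorem distance_to_diagonal_le_sum_dephasing_disturbances (n : ℕ)
    (ρ : Matrix (Fin n → Fin 2) (Fin n → Fin 2) ℂ) :
    frob (Matrix.diagonal (fun s => ρ s s) - ρ)
      ≤ (1 / 2) * ∑ i : Fin n, frob (Zat n i * ρ * Zat n i - ρ) := by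
  set a : (Fin n → Fin 2) → (Fin n → Fin 2) → ℝ := fun s t => ‖ρ s t‖ ^ 2 with ha
  have ha0 : ∀ s t, 0 ≤ a s t := fun s t => by positivity
  set g : Fin n → ℝ := fun i => ∑ s, ∑ t, (if s i = t i then 0 else a s t) with hg
  have hg0 : ∀ i, 0 ≤ g i := fun i =>
    Finset.sum_nonneg fun s _ => Finset.sum_nonneg fun t _ => by
      split <;> [rfl; exact ha0 s t]
  -- LHS entries
  have hL : frob (Matrix.diagonal (fun s => ρ s s) - ρ)
      = Real.sqrt (∑ s, ∑ t, (if s = t then 0 else a s t)) := by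
    unfold frob
    congr 1
    refine Finset.sum_congr rfl fun s _ => Finset.sum_congr rfl fun t _ => ?_
    by_cases h : s = t
    · subst h; simp [Matrix.sub_apply, Matrix.diagonal_apply_eq]
    · simp [Matrix.sub_apply, Matrix.diagonal_apply_ne _ h, h, ha]
  -- RHS entries
  have hR : ∀ i : Fin n, frob (Zat n i * ρ * Zat n i - ρ) = 2 * Real.sqrt (g i) := by
    intro i
    have hentry : ∀ s t, ‖(Zat n i * ρ * Zat n i - ρ) s t‖ ^ 2
        = (if s i = t i then 0 else 4 * a s t) := by
      intro s t
      have h1 : (Zat n i * ρ * Zat n i - ρ) s t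
          = ((-1 : ℂ) ^ (s i : ℕ) * (-1 : ℂ) ^ (t i : ℕ) - 1) * ρ s t := by
        simp [Zat, Matrix.sub_apply, Matrix.mul_apply, Matrix.diagonal_apply, Finset.sum_ite_eq,
          Finset.sum_ite_eq']
        ring
      rw [h1]
      by_cases h : s i = t i
      · rw [h]
        have : (-1 : ℂ) ^ (t i : ℕ) * (-1 : ℂ) ^ (t i : ℕ) - 1 = 0 := by
          rw [← pow_add, ← two_mul, pow_mul]; norm_num
        simp [this, h]
      · have h2 : ∀ u v : Fin 2, u ≠ v → (-1 : ℂ) ^ (u : ℕ) * (-1 : ℂ) ^ (v : ℕ) - 1 = -2 := by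
          intro u v huv
          fin_cases u <;> fin_cases v <;> simp_all <;> norm_num
        rw [h2 _ _ h, if_neg h, norm_mul, mul_pow, ha]
        norm_num
    unfold frob
    have : ∑ s, ∑ t, ‖(Zat n i * ρ * Zat n i - ρ) s t‖ ^ 2 = 4 * g i := by
      rw [hg, Finset.mul_sum]
      refine Finset.sum_congr rfl fun s _ => ?_
      rw [Finset.mul_sum]
      refine Finset.sum_congr rfl fun t _ => ?_
      rw [hentry]
      split <;> simp
    rw [this, show (4 : ℝ) * g i = 2 ^ 2 * g i by norm_num, Real.sqrt_mul (by positivity),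
      Real.sqrt_sq (by norm_num)]
  -- main chain
  rw [hL]
  have key : (∑ s, ∑ t, (if s = t then 0 else a s t)) ≤ ∑ i : Fin n, g i := by
    have : ∀ s t : Fin n → Fin 2, (if s = t then 0 else a s t)
        ≤ ∑ i : Fin n, (if s i = t i then 0 else a s t) := by
      intro s t
      by_cases h : s = t
      · simp [h]
      · rw [if_neg h]
        obtain ⟨i, hi⟩ : ∃ i, s i ≠ t i := by
          by_contra hc
          push_neg at hc
          exact h (funext hc)
        calc a s t = (if s i = t i then 0 else a s t) := by simp [hi]
          _ ≤ _ := Finset.single_le_sum (f := fun j => if s j = t j then 0 else a s t)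
              (fun j _ => by split <;> [rfl; exact ha0 s t]) (Finset.mem_univ i)
    calc (∑ s, ∑ t, (if s = t then 0 else a s t))
        ≤ ∑ s, ∑ t, ∑ i : Fin n, (if s i = t i then 0 else a s t) := by
          gcongr with s _ t _; exact this s t
      _ = ∑ s, ∑ i : Fin n, ∑ t, (if s i = t i then 0 else a s t) :=
          Finset.sum_congr rfl fun s _ => Finset.sum_comm
      _ = ∑ i : Fin n, g i := Finset.sum_comm
  calc Real.sqrt (∑ s, ∑ t, (if s = t then 0 else a s t))
      ≤ Real.sqrt (∑ i : Fin n, g i) := Real.sqrt_le_sqrt key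
    _ ≤ ∑ i : Fin n, Real.sqrt (g i) := sqrt_sum_le _ _ fun i _ => hg0 i
    _ = (1 / 2) * ∑ i : Fin n, frob (Zat n i * ρ * Zat n i - ρ) := by
        rw [Finset.mul_sum]
        exact Finset.sum_congr rfl fun i _ => by rw [hR i]; ring
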